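/- Let Y and Z be real Banach spaces with Y nonzero, let S : Z → Y be a bounded linear operator, and define the bounded linear operator T on X = Y ⊕∞ Z by T(y, z) = (S z, 0). Then v(T) = ‖S‖. -/

import Mathlib

open scoped ENNReal

/-- The numerical radius of a bounded linear operator `T` on a real Banach space `X`. -/
noncomputable def numRadius {X : Type*} [NormedAddCommGroup X] [NormedSpace ℝ X]
    (T : X →L[ℝ] X) : ℝ :=
  sSup {r : ℝ | ∃ (x : X) (f : X →L[ℝ] ℝ), ‖x‖ = 1 ∧ ‖f‖ = 1 ∧ f x = 1 ∧ r = |f (T x)|}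

/-- Let `Y` be nonzero and `S : Z → Y` a bounded linear operator. The operator
`T(y,z) = (S z, 0)` on `X = Y ⊕∞ Z` satisfies `v(T) = ‖S‖`. -/
theorem numRadius_eq_norm_of_prodLinfty
    {Y : Type*} [NormedAddCommGroup Y] [NormedSpace ℝ Y] [CompleteSpace Y] [Nontrivial Y]
    {Z : Type*} [NormedAddCommGroup Z] [NormedSpace ℝ Z] [CompleteSpace Z]
    (S : Z →L[ℝ] Y)
    (T : WithLp ∞ (Y × Z) →L[ℝ] WithLp ∞ (Y × Z))
    (hT : ∀ (y : Y) (z : Z),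
      T ((WithLp.prodContinuousLinearEquiv ∞ ℝ Y Z).symm (y, z)) =
        (WithLp.prodContinuousLinearEquiv ∞ ℝ Y Z).symm (S z, 0)) :
    numRadius T = ‖S‖ := by
  classical
  set E := WithLp.prodContinuousLinearEquiv ∞ ℝ Y Z with hEdef
  set A := {r : ℝ | ∃ (x : WithLp ∞ (Y × Z)) (f : WithLp ∞ (Y × Z) →L[ℝ] ℝ),
      ‖x‖ = 1 ∧ ‖f‖ = 1 ∧ f x = 1 ∧ r = |f (T x)|} with hA
  -- norm of E.symm (y, z) is max
  have hmax : ∀ (y : Y) (z : Z), ‖E.symm (y, z)‖ = max ‖y‖ ‖z‖ := fun y z => rfl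
  -- building the functional from g : Y →L[ℝ] ℝ
  let F : (Y →L[ℝ] ℝ) → (WithLp ∞ (Y × Z) →L[ℝ] ℝ) := fun g =>
    g.comp ((ContinuousLinearMap.fst ℝ Y Z).comp E.toContinuousLinearMap)
  have hFapp : ∀ (g : Y →L[ℝ] ℝ) (w : WithLp ∞ (Y × Z)), F g w = g (E w).1 := fun _ _ => rfl
  have hFnorm : ∀ (g : Y →L[ℝ] ℝ), ‖g‖ = 1 → ‖F g‖ ≤ 1 := by
    intro g hg
    refine ContinuousLinearMap.opNorm_le_bound _ zero_le_one fun w => ?_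
    rw [hFapp, one_mul]
    calc |g (E w).1| ≤ ‖g‖ * ‖(E w).1‖ := g.le_opNorm _
      _ = ‖(E w).1‖ := by rw [hg, one_mul]
      _ ≤ ‖w‖ := by
          conv_rhs => rw [← E.symm_apply_apply w]
          rw [show E w = ((E w).1, (E w).2) from rfl, hmax]
          exact le_max_left _ _
  -- construction of elements of A
  have hmem : ∀ (u : Y) (z : Z) (g : Y →L[ℝ] ℝ), ‖u‖ = 1 → ‖z‖ ≤ 1 → ‖g‖ = 1 → g u = 1 →
      |g (S z)| ∈ A := by
    intro u z g hu hz hg hgu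
    refine ⟨E.symm (u, z), F g, ?_, ?_, ?_, ?_⟩
    · rw [hmax, hu, max_eq_left hz]
    · refine le_antisymm (hFnorm g hg) ?_
      have h1 : F g (E.symm (u, z)) = 1 := by
        rw [hFapp, E.apply_symm_apply]; exact hgu
      have := (F g).le_opNorm (E.symm (u, z))
      rw [h1, hmax, hu, max_eq_left hz, mul_one] at this
      exact le_trans (by norm_num) this
    · rw [hFapp, E.apply_symm_apply]; exact hgu
    · rw [hT, hFapp, E.apply_symm_apply]
  -- 0 ∈ A
  have h0 : (0 : ℝ) ∈ A := by
    obtain ⟨y₀, hy₀⟩ := exists_ne (0 : Y)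
    have hn : ‖y₀‖ ≠ 0 := norm_ne_zero_iff.mpr hy₀
    set u := ‖y₀‖⁻¹ • y₀ with hu
    have hu1 : ‖u‖ = 1 := by
      rw [hu, norm_smul, norm_inv, norm_norm, inv_mul_cancel₀ hn]
    have hune : u ≠ 0 := by
      intro h; rw [h, norm_zero] at hu1; norm_num at hu1
    obtain ⟨g, hg, hgu⟩ := exists_dual_vector ℝ u (norm_ne_zero_iff.mpr hune)
    have hgu1 : g u = 1 := by rw [hgu, hu1]; norm_num
    have := hmem u 0 g hu1 (by simp) hg hgu1
    simpa using this
  have hne : A.Nonempty := ⟨0, h0⟩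
  -- upper bound
  have hub : ∀ r ∈ A, r ≤ ‖S‖ := by
    rintro r ⟨x, f, hx, hf, hfx, rfl⟩
    have hx' : x = E.symm ((E x).1, (E x).2) := (E.symm_apply_apply x).symm
    have hTx : T x = E.symm (S (E x).2, 0) := by
      conv_lhs => rw [hx']
      exact hT _ _
    have hz1 : ‖(E x).2‖ ≤ 1 := by
      rw [← hx]
      conv_rhs => rw [hx', hmax]
      exact le_max_right _ _
    calc |f (T x)| ≤ ‖f‖ * ‖T x‖ := f.le_opNorm _
      _ = ‖S (E x).2‖ := by rw [hf, one_mul, hTx, hmax, norm_zero, max_eq_left (norm_nonneg _)]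
      _ ≤ ‖S‖ * ‖(E x).2‖ := S.le_opNorm _
      _ ≤ ‖S‖ * 1 := by
          exact mul_le_mul_of_nonneg_left hz1 (norm_nonneg _)
      _ = ‖S‖ := mul_one _
  have hbdd : BddAbove A := ⟨‖S‖, hub⟩
  refine le_antisymm (csSup_le hne hub) ?_
  -- lower bound
  refine le_of_forall_lt fun c hc => ?_
  rcases lt_or_ge c 0 with hc0 | hc0
  · exact lt_of_lt_of_le hc0 (le_csSup hbdd h0)
  obtain ⟨z, hz, hSz⟩ := S.exists_lt_apply_of_lt_opNorm hc
  have hSzne : S z ≠ 0 := by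
    intro h; rw [h, norm_zero] at hSz; exact absurd hSz (not_lt.mpr hc0)
  have hn : ‖S z‖ ≠ 0 := norm_ne_zero_iff.mpr hSzne
  obtain ⟨g, hg, hgSz⟩ := exists_dual_vector ℝ (S z) hn
  set u := ‖S z‖⁻¹ • S z with hu
  have hu1 : ‖u‖ = 1 := by
    rw [hu, norm_smul, norm_inv, norm_norm, inv_mul_cancel₀ hn]
  have hgu1 : g u = 1 := by
    rw [hu, map_smul, smul_eq_mul, hgSz]
    simpa using inv_mul_cancel₀ hn
  have hmemc := hmem u z g hu1 (le_of_lt hz) hg hgu1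
  refine lt_of_lt_of_le ?_ (le_csSup hbdd hmemc)
  calc c < ‖S z‖ := hSz
    _ = |g (S z)| := by simp [hgSz, abs_of_nonneg]
  -- done
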